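/- Let Q be an abstract key polynomial for μ on K[X]. Then for any f ∈ K[X], ε_{μ_Q}(f) ≤ ε_{μ_Q}(Q) = ε_μ(Q), where ε denotes the epsilon factor and μ_Q is the truncation along Q. -/

import Mathlib

open Polynomial

/-- An additive (Krull) valuation with values in `Γ ∪ {∞}`. -/
structure IsValAdd {R : Type*} [CommRing R] {Γ : Type*} [AddCommGroup Γ] [LinearOrder Γ] [IsOrderedAddMonoid Γ]
    (v : R → WithTop Γ) : Prop where
  map_mul : ∀ a b, v (a * b) = v a + v b
  map_add : ∀ a b, min (v a) (v b) ≤ v (a + b)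
  map_one : v 1 = 0
  map_zero : v 0 = ⊤
  supp : ∀ a, v a = ⊤ → a = 0

/-- The valuation associated to a pair `(a, δ)`:
`ν_{a,δ}(∑ aᵢ (X - a)ⁱ) = min_i (ν aᵢ + i•δ)`. -/
noncomputable def pairVal {K : Type*} [Field K] {Γ : Type*} [AddCommGroup Γ] [LinearOrder Γ] [IsOrderedAddMonoid Γ]
    (ν : K → WithTop Γ) (a : K) (δ : Γ) (f : K[X]) : WithTop Γ :=
  (Finset.range (f.natDegree + 1)).inf
    fun i => ν ((Polynomial.taylor a f).coeff i) + ((i • δ : Γ) : WithTop Γ)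

/-- The coefficients of the `Q`-expansion of a polynomial, by iterated euclidean division. -/
noncomputable def qCoeff {K : Type*} [Field K] (Q : K[X]) : ℕ → K[X] → K[X]
  | 0, f => f %ₘ Q
  | n + 1, f => qCoeff Q n (f /ₘ Q)

/-- The truncation `μ_Q` of `μ` along `Q` : `μ_Q(f) = min_i μ(fᵢ Qⁱ)` over the
`Q`-expansion `f = ∑ fᵢ Qⁱ`. -/
noncomputable def trunc {K : Type*} [Field K] {Γ : Type*} [AddCommGroup Γ] [LinearOrder Γ] [IsOrderedAddMonoid Γ]
    (μ : K[X] → WithTop Γ) (Q : K[X]) (f : K[X]) : WithTop Γ :=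
  (Finset.range (f.natDegree + 1)).inf fun i => μ (qCoeff Q i f * Q ^ i)

/-- `ε_μ(f) < ε_μ(Q)`, stated in cross-multiplied form (valid in the divisible hull). -/
def EpsLt {K : Type*} [Field K] {Γ : Type*} [AddCommGroup Γ] [LinearOrder Γ] [IsOrderedAddMonoid Γ]
    (μ : K[X] → WithTop Γ) (f Q : K[X]) : Prop :=
  ∃ j, 1 ≤ j ∧ μ (hasseDeriv j Q) ≠ ⊤ ∧
    ∀ i, 1 ≤ i → j • μ f + i • μ (hasseDeriv j Q) < i • μ Q + j • μ (hasseDeriv i f)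

/-- `ε_{μ₁}(f) ≤ ε_{μ₂}(g)`, stated in cross-multiplied form. -/
def EpsLE {K L : Type*} [Field K] [Field L] {Γ : Type*} [AddCommGroup Γ] [LinearOrder Γ] [IsOrderedAddMonoid Γ]
    (μ₁ : K[X] → WithTop Γ) (f : K[X]) (μ₂ : L[X] → WithTop Γ) (g : L[X]) : Prop :=
  ∀ i, 1 ≤ i → ∃ j, 1 ≤ j ∧
    j • μ₁ f + i • μ₂ (hasseDeriv j g) ≤ i • μ₂ g + j • μ₁ (hasseDeriv i f)

/-- `Q` is an abstract key polynomial for `μ`. -/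
def IsABKP {K : Type*} [Field K] {Γ : Type*} [AddCommGroup Γ] [LinearOrder Γ] [IsOrderedAddMonoid Γ]
    (μ : K[X] → WithTop Γ) (Q : K[X]) : Prop :=
  Q.Monic ∧ ∀ f : K[X], f ≠ 0 → f.degree < Q.degree → EpsLt μ f Q

namespace EpsAux

variable {Γ : Type*} [AddCommGroup Γ] [LinearOrder Γ] [IsOrderedAddMonoid Γ]

lemma smul_top {n : ℕ} (hn : n ≠ 0) : n • (⊤ : WithTop Γ) = ⊤ := by
  obtain ⟨m, rfl⟩ := Nat.exists_eq_succ_of_ne_zero hn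
  rw [succ_nsmul]; simp

lemma smul_ne_top {n : ℕ} {a : WithTop Γ} (ha : a ≠ ⊤) : n • a ≠ ⊤ := by
  lift a to Γ using ha
  rw [← WithTop.coe_nsmul]
  exact WithTop.coe_ne_top

lemma smul_le_smul_iff {n : ℕ} (hn : n ≠ 0) {a b : WithTop Γ} : n • a ≤ n • b ↔ a ≤ b := by
  induction b with
  | top => simp [smul_top hn]
  | coe b =>
    induction a with
    | top => simp [smul_top hn, ← WithTop.coe_nsmul, top_le_iff]
    | coe a =>
      rw [← WithTop.coe_nsmul, ← WithTop.coe_nsmul, WithTop.coe_le_coe, WithTop.coe_le_coe]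
      exact ⟨fun h => le_of_nsmul_le_nsmul_right hn h, fun h => nsmul_le_nsmul_right h n⟩

lemma smul_lt_smul_iff {n : ℕ} (hn : n ≠ 0) {a b : WithTop Γ} : n • a < n • b ↔ a < b := by
  rw [← not_le, ← not_le, smul_le_smul_iff hn]

lemma wadd_le_add {a b c d : WithTop Γ} (h1 : a ≤ b) (h2 : c ≤ d) : a + c ≤ b + d :=
  add_le_add h1 h2

lemma wadd_lt_add {a b c d : WithTop Γ} (h1 : a < b) (h2 : c ≤ d) (hc : c ≠ ⊤) :
    a + c < b + d :=
  lt_of_lt_of_le ((WithTop.add_lt_add_iff_right hc).2 h1) (add_le_add_right h2 _)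

lemma wcancel {a b c : WithTop Γ} (hc : c ≠ ⊤) (h : a + c ≤ b + c) : a ≤ b :=
  (WithTop.add_le_add_iff_right hc).1 h

lemma wcancel_lt {a b c : WithTop Γ} (hc : c ≠ ⊤) (h : a + c < b + c) : a < b :=
  (WithTop.add_lt_add_iff_right hc).1 h

lemma wmin_add {a b c : WithTop Γ} : min a b + c = min (a + c) (b + c) := by
  rcases le_total a b with h | h
  · rw [min_eq_left h, min_eq_left (add_le_add_left h c)]
  · rw [min_eq_right h, min_eq_right (add_le_add_left h c)]

section Mu

variable {K : Type*} [Field K] {μ : K[X] → WithTop Γ} (hμ : IsValAdd μ)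
include hμ

lemma mu_ne_top {f : K[X]} (hf : f ≠ 0) : μ f ≠ ⊤ := fun h => hf (hμ.supp f h)

lemma mu_neg (f : K[X]) : μ (-f) = μ f := by
  have h1 : μ (-1 : K[X]) + μ (-1 : K[X]) = 0 := by
    rw [← hμ.map_mul]; norm_num [hμ.map_one]
  have h2 : μ (-1 : K[X]) ≠ ⊤ := by
    intro h; rw [h] at h1; simp at h1
  lift (μ (-1 : K[X])) to Γ using h2 with a ha
  have h3 : a + a = 0 := by
    have := h1
    rw [← WithTop.coe_add] at this
    exact_mod_cast this
  have h4 : a = 0 := by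
    rcases lt_trichotomy a 0 with h | h | h
    · exact absurd (h3 ▸ add_lt_add h h) (by simp)
    · exact h
    · exact absurd (h3 ▸ add_lt_add h h) (by simp)
  have : -f = (-1 : K[X]) * f := by ring
  rw [this, hμ.map_mul, ← ha, h4]
  simp

lemma inf_le_mu_sum {ι : Type*} (s : Finset ι) (v : ι → K[X]) :
    (s.inf fun k => μ (v k)) ≤ μ (∑ k ∈ s, v k) := by
  induction s using Finset.cons_induction with
  | empty => simp [hμ.map_zero]
  | cons a s ha ih =>
    rw [Finset.sum_cons, Finset.inf_cons]
    exact le_trans (min_le_min le_rfl ih) (hμ.map_add _ _)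

lemma mu_add_eq_left {x y : K[X]} (h : μ x < μ y) : μ (x + y) = μ x := by
  have h2 : min (μ (x + y)) (μ y) ≤ μ x := by
    have h5 := hμ.map_add (x + y) (-y)
    rw [mu_neg hμ] at h5
    simpa using h5
  refine le_antisymm ?_ ?_
  · rcases min_cases (μ (x + y)) (μ y) with ⟨he, _⟩ | ⟨he, hle⟩
    · rwa [he] at h2
    · rw [he] at h2; exact absurd (lt_of_lt_of_le h h2) (lt_irrefl _)
  · exact le_trans (le_min le_rfl h.le) (hμ.map_add x y)

lemma mu_sum_eq {ι : Type*} [DecidableEq ι] {s : Finset ι} {v : ι → K[X]} {k₀ : ι} {v₀ : WithTop Γ}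
    (hk₀ : k₀ ∈ s) (h0 : μ (v k₀) = v₀) (htop : v₀ ≠ ⊤)
    (hother : ∀ k ∈ s, k ≠ k₀ → v₀ < μ (v k)) : μ (∑ k ∈ s, v k) = v₀ := by
  rw [← Finset.add_sum_erase s v hk₀]
  have hrest : v₀ < μ (∑ k ∈ s.erase k₀, v k) := by
    refine lt_of_lt_of_le ?_ (inf_le_mu_sum hμ _ _)
    refine (Finset.lt_inf_iff (lt_top_iff_ne_top.2 htop)).2 fun b hb => ?_
    exact hother b (Finset.mem_of_mem_erase hb) (Finset.ne_of_mem_erase hb)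
  rw [mu_add_eq_left hμ (h0 ▸ hrest)]
  exact h0

end Mu

end EpsAux
section Trunc

open EpsAux

set_option linter.unusedSectionVars false

variable {Γ : Type*} [AddCommGroup Γ] [LinearOrder Γ] [IsOrderedAddMonoid Γ] {K : Type*} [Field K]
variable {μ : K[X] → WithTop Γ} {Q : K[X]}

lemma qCoeff_zero_eq (f : K[X]) : qCoeff Q 0 f = f %ₘ Q := rfl

lemma qCoeff_succ_eq (i : ℕ) (f : K[X]) : qCoeff Q (i + 1) f = qCoeff Q i (f /ₘ Q) := rfl

lemma qCoeff_zero_poly (i : ℕ) : qCoeff Q i (0 : K[X]) = 0 := by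
  induction i with
  | zero => simp [qCoeff_zero_eq]
  | succ i ih => rw [qCoeff_succ_eq]; simpa using ih

variable (hQm : Q.Monic)
include hQm

lemma add_divByMonic' (f g : K[X]) : (f + g) /ₘ Q = f /ₘ Q + g /ₘ Q := by
  refine (Polynomial.div_modByMonic_unique (f /ₘ Q + g /ₘ Q) (f %ₘ Q + g %ₘ Q) hQm
    ⟨?_, ?_⟩).1
  · have h1 := Polynomial.modByMonic_add_div f Q
    have h2 := Polynomial.modByMonic_add_div g Q
    rw [mul_add]
    linear_combination h1 + h2
  · exact lt_of_le_of_lt (Polynomial.degree_add_le _ _)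
      (max_lt (Polynomial.degree_modByMonic_lt f hQm) (Polynomial.degree_modByMonic_lt g hQm))

lemma qCoeff_add (i : ℕ) (f g : K[X]) :
    qCoeff Q i (f + g) = qCoeff Q i f + qCoeff Q i g := by
  induction i generalizing f g with
  | zero => simp [qCoeff_zero_eq, Polynomial.add_modByMonic]
  | succ i ih => rw [qCoeff_succ_eq, qCoeff_succ_eq, qCoeff_succ_eq, add_divByMonic' hQm, ih]

lemma qCoeff_degree_lt (i : ℕ) (f : K[X]) : (qCoeff Q i f).degree < Q.degree := by
  induction i generalizing f with
  | zero => exact Polynomial.degree_modByMonic_lt f hQm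
  | succ i ih => rw [qCoeff_succ_eq]; exact ih _

lemma qCoeff_small_zero {f : K[X]} (hf : f.degree < Q.degree) (i : ℕ) :
    qCoeff Q (i + 1) f = 0 := by
  rw [qCoeff_succ_eq, (Polynomial.divByMonic_eq_zero_iff hQm).2 hf, qCoeff_zero_poly]

variable (hn : 1 ≤ Q.natDegree)
include hn

lemma qCoeff_eq_zero {i : ℕ} {f : K[X]} (h : f.natDegree < i) : qCoeff Q i f = 0 := by
  induction i generalizing f with
  | zero => omega
  | succ i ih =>
    rw [qCoeff_succ_eq]
    by_cases hq : f /ₘ Q = 0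
    · rw [hq, qCoeff_zero_poly]
    · have hd : Q.natDegree ≤ f.natDegree := by
        refine Polynomial.natDegree_le_natDegree (le_of_not_gt ?_)
        exact fun hc => hq ((Polynomial.divByMonic_eq_zero_iff hQm).2 hc)
      refine ih ?_
      rw [Polynomial.natDegree_divByMonic f hQm]
      omega

variable (hμ : IsValAdd μ)
include hμ

lemma trunc_le (i : ℕ) (f : K[X]) : trunc μ Q f ≤ μ (qCoeff Q i f * Q ^ i) := by
  by_cases h : i ≤ f.natDegree
  · exact Finset.inf_le (Finset.mem_range.2 (by omega))
  · rw [qCoeff_eq_zero hQm hn (by omega), zero_mul, hμ.map_zero]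
    exact le_top

lemma le_trunc {x : WithTop Γ} {f : K[X]} (h : ∀ i, x ≤ μ (qCoeff Q i f * Q ^ i)) :
    x ≤ trunc μ Q f :=
  Finset.le_inf fun i _ => h i

lemma trunc_zero_poly : trunc μ Q (0 : K[X]) = ⊤ := by
  refine le_antisymm le_top (le_trunc hQm hn hμ fun i => ?_)
  rw [qCoeff_zero_poly, zero_mul, hμ.map_zero]

lemma min_trunc_le (f g : K[X]) :
    min (trunc μ Q f) (trunc μ Q g) ≤ trunc μ Q (f + g) := by
  refine le_trunc hQm hn hμ fun i => ?_
  rw [qCoeff_add hQm, add_mul]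
  refine le_trans (min_le_min (trunc_le hQm hn hμ i f) (trunc_le hQm hn hμ i g)) ?_
  exact hμ.map_add _ _

lemma inf_trunc_le_sum {ι : Type*} (s : Finset ι) (v : ι → K[X]) :
    (s.inf fun k => trunc μ Q (v k)) ≤ trunc μ Q (∑ k ∈ s, v k) := by
  induction s using Finset.cons_induction with
  | empty => simp [trunc_zero_poly hQm hn hμ]
  | cons a s ha ih =>
    rw [Finset.sum_cons, Finset.inf_cons]
    exact le_trans (min_le_min le_rfl ih) (min_trunc_le hQm hn hμ _ _)

lemma trunc_le_mod (f : K[X]) : trunc μ Q f ≤ μ (f %ₘ Q) := by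
  have h := trunc_le hQm hn hμ 0 f
  rwa [qCoeff_zero_eq, pow_zero, mul_one] at h

lemma mu_mul_q_succ (x : K[X]) (k : ℕ) : μ (x * Q ^ (k + 1)) = μ (x * Q ^ k) + μ Q := by
  rw [pow_succ, ← mul_assoc, hμ.map_mul]

lemma trunc_le_div (f : K[X]) : trunc μ Q f ≤ trunc μ Q (f /ₘ Q) + μ Q := by
  obtain ⟨k₀, _, hk₀⟩ := Finset.exists_mem_eq_inf (Finset.range ((f /ₘ Q).natDegree + 1))
    (by simp) (fun i => μ (qCoeff Q i (f /ₘ Q) * Q ^ i))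
  show trunc μ Q f ≤ trunc μ Q (f /ₘ Q) + μ Q
  rw [show trunc μ Q (f /ₘ Q) = μ (qCoeff Q k₀ (f /ₘ Q) * Q ^ k₀) from hk₀]
  rw [← mu_mul_q_succ hQm hn hμ]
  exact trunc_le hQm hn hμ (k₀ + 1) f

lemma min_le_trunc (f : K[X]) :
    min (μ (f %ₘ Q)) (trunc μ Q (f /ₘ Q) + μ Q) ≤ trunc μ Q f := by
  refine le_trunc hQm hn hμ fun i => ?_
  cases i with
  | zero => rw [qCoeff_zero_eq, pow_zero, mul_one]; exact min_le_left _ _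
  | succ k =>
    rw [qCoeff_succ_eq, mu_mul_q_succ hQm hn hμ]
    refine le_trans (min_le_right _ _) ?_
    exact add_le_add_left (trunc_le hQm hn hμ k (f /ₘ Q)) _

lemma trunc_small {f : K[X]} (hf : f.degree < Q.degree) : trunc μ Q f = μ f := by
  refine le_antisymm ?_ (le_trunc hQm hn hμ fun i => ?_)
  · calc trunc μ Q f ≤ μ (f %ₘ Q) := trunc_le_mod hQm hn hμ f
      _ = μ f := by rw [(Polynomial.modByMonic_eq_self_iff hQm).2 hf]
  · cases i with
    | zero =>
      rw [qCoeff_zero_eq, pow_zero, mul_one, (Polynomial.modByMonic_eq_self_iff hQm).2 hf]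
    | succ k => rw [qCoeff_small_zero hQm hf, zero_mul, hμ.map_zero]; exact le_top

omit hμ in
lemma degree_one_lt : (1 : K[X]).degree < Q.degree := by
  rw [Polynomial.degree_one, Polynomial.degree_eq_natDegree hQm.ne_zero]
  exact_mod_cast hn

omit hn hμ in
lemma q_self_div : Q /ₘ Q = 1 ∧ Q %ₘ Q = 0 := by
  refine Polynomial.div_modByMonic_unique 1 0 hQm ⟨by simp, ?_⟩
  rw [Polynomial.degree_zero]
  exact bot_lt_iff_ne_bot.2 (by simp [Polynomial.degree_eq_bot, hQm.ne_zero])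

lemma trunc_Q : trunc μ Q Q = μ Q := by
  obtain ⟨hdiv, hmod⟩ := q_self_div hQm
  refine le_antisymm ?_ ?_
  · have h := trunc_le_div hQm hn hμ Q
    rwa [hdiv, trunc_small hQm hn hμ (degree_one_lt hQm hn), hμ.map_one, zero_add] at h
  · have h := min_le_trunc hQm hn hμ Q
    rwa [hdiv, hmod, hμ.map_zero, trunc_small hQm hn hμ (degree_one_lt hQm hn), hμ.map_one,
      zero_add, min_eq_right le_top] at h

omit hn hμ in
lemma mulq_div : ∀ h : K[X], (h * Q) /ₘ Q = h ∧ (h * Q) %ₘ Q = 0 := fun h =>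
  Polynomial.div_modByMonic_unique h 0 hQm ⟨by ring_nf, by
    rw [Polynomial.degree_zero]
    exact bot_lt_iff_ne_bot.2 (by simp [Polynomial.degree_eq_bot, hQm.ne_zero])⟩

lemma trunc_mul_Q_ge (h : K[X]) : trunc μ Q h + μ Q ≤ trunc μ Q (h * Q) := by
  obtain ⟨hdiv, hmod⟩ := mulq_div hQm h
  have hm := min_le_trunc hQm hn hμ (h * Q)
  rwa [hdiv, hmod, hμ.map_zero, min_eq_right le_top] at hm

end Trunc
section Eps

open EpsAux

set_option linter.unusedSectionVars false

variable {Γ : Type*} [AddCommGroup Γ] [LinearOrder Γ] [IsOrderedAddMonoid Γ] {K : Type*} [Field K]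
variable {μ : K[X] → WithTop Γ} {Q : K[X]}

lemma smul_smul_comm (m n : ℕ) (x : WithTop Γ) : m • (n • x) = n • (m • x) := by
  rw [← mul_smul, ← mul_smul, Nat.mul_comm]

lemma wsmul_mono {a b : WithTop Γ} (n : ℕ) (h : a ≤ b) : n • a ≤ n • b := by
  induction n with
  | zero => simp
  | succ n ih => rw [succ_nsmul, succ_nsmul]; exact add_le_add ih h

variable (hQm : Q.Monic) (hn : 1 ≤ Q.natDegree)
include hQm

lemma deg_bot_lt : (⊥ : WithBot ℕ) < Q.degree := by
  exact bot_lt_iff_ne_bot.2 (by simp [Polynomial.degree_eq_bot, hQm.ne_zero])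

lemma deg_hasse_lt_of_lt {g : K[X]} (hg : g.degree < Q.degree) (i : ℕ) :
    (Polynomial.hasseDeriv i g).degree < Q.degree := by
  by_cases h : Polynomial.hasseDeriv i g = 0
  · rw [h, Polynomial.degree_zero]; exact deg_bot_lt hQm
  · have hg0 : g ≠ 0 := fun hg0 => h (by simp [hg0])
    have h1 : (Polynomial.hasseDeriv i g).natDegree ≤ g.natDegree :=
      le_trans (Polynomial.natDegree_hasseDeriv_le g i) (Nat.sub_le _ _)
    calc (Polynomial.hasseDeriv i g).degree = ((Polynomial.hasseDeriv i g).natDegree : WithBot ℕ) :=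
          Polynomial.degree_eq_natDegree h
      _ ≤ (g.natDegree : WithBot ℕ) := by exact_mod_cast h1
      _ = g.degree := (Polynomial.degree_eq_natDegree hg0).symm
      _ < Q.degree := hg

include hn

lemma deg_hasseQ_lt {s : ℕ} (hs : 1 ≤ s) :
    (Polynomial.hasseDeriv s Q).degree < Q.degree := by
  by_cases h : Polynomial.hasseDeriv s Q = 0
  · rw [h, Polynomial.degree_zero]; exact deg_bot_lt hQm
  · have h1 : (Polynomial.hasseDeriv s Q).natDegree < Q.natDegree := by
      have := Polynomial.natDegree_hasseDeriv_le Q s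
      omega
    calc (Polynomial.hasseDeriv s Q).degree
        = ((Polynomial.hasseDeriv s Q).natDegree : WithBot ℕ) := Polynomial.degree_eq_natDegree h
      _ < (Q.natDegree : WithBot ℕ) := by exact_mod_cast h1
      _ = Q.degree := (Polynomial.degree_eq_natDegree hQm.ne_zero).symm

omit hn

lemma hasse_natDegree_eq_one : Polynomial.hasseDeriv Q.natDegree Q = 1 := by
  ext m
  rw [Polynomial.hasseDeriv_coeff]
  cases m with
  | zero => simp [hQm.coeff_natDegree]
  | succ m =>
    rw [Polynomial.coeff_eq_zero_of_natDegree_lt (by omega)]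
    simp [Polynomial.coeff_one]

lemma hasse_eq_zero_of_gt {t : ℕ} (ht : Q.natDegree < t) : Polynomial.hasseDeriv t Q = 0 := by
  ext m
  rw [Polynomial.hasseDeriv_coeff]
  rw [Polynomial.coeff_eq_zero_of_natDegree_lt (by omega)]
  simp

variable (hμ : IsValAdd μ)
include hμ hn

lemma exists_j0 : ∃ j₀, 1 ≤ j₀ ∧ μ (Polynomial.hasseDeriv j₀ Q) ≠ ⊤ ∧
    ∀ t, j₀ • μ Q + t • μ (Polynomial.hasseDeriv j₀ Q) ≤
      j₀ • μ (Polynomial.hasseDeriv t Q) + t • μ Q := by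
  classical
  have hQ0 : Q ≠ 0 := hQm.ne_zero
  have hQtop : μ Q ≠ ⊤ := mu_ne_top hμ hQ0
  set n := Q.natDegree with hn_def
  have hμn : μ (Polynomial.hasseDeriv n Q) = 0 := by
    rw [hasse_natDegree_eq_one hQm, hμ.map_one]
  set S : Finset ℕ := (Finset.Icc 1 n).filter (fun j => μ (Polynomial.hasseDeriv j Q) ≠ ⊤)
    with hS_def
  have hnS : n ∈ S := by
    rw [hS_def, Finset.mem_filter, Finset.mem_Icc]
    refine ⟨⟨hn, le_rfl⟩, ?_⟩
    rw [hμn]; exact (by simp : (0 : WithTop Γ) ≠ ⊤)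
  set N := n.factorial with hN_def
  have hN0 : N ≠ 0 := Nat.factorial_ne_zero n
  set AQ : Γ := WithTop.untopD 0 (μ Q) with hAQ_def
  have hAQ : (AQ : WithTop Γ) = μ Q := by
    rw [hAQ_def]; cases hq : μ Q with
    | top => exact absurd hq hQtop
    | coe a => simp [WithTop.untopD_coe]
  set av : ℕ → Γ := fun j => WithTop.untopD 0 (μ (Polynomial.hasseDeriv j Q)) with hav_def
  have hav : ∀ j, μ (Polynomial.hasseDeriv j Q) ≠ ⊤ →
      ((av j : Γ) : WithTop Γ) = μ (Polynomial.hasseDeriv j Q) := by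
    intro j hj
    rw [hav_def]; cases hq : μ (Polynomial.hasseDeriv j Q) with
    | top => exact absurd hq hj
    | coe a => simp [hq, WithTop.untopD_coe]
  obtain ⟨j₀, hj₀S, hmax⟩ := Finset.exists_max_image S (fun j => (N / j) • (AQ - av j)) ⟨n, hnS⟩
  have hj₀mem := hj₀S
  rw [hS_def, Finset.mem_filter, Finset.mem_Icc] at hj₀mem
  obtain ⟨⟨hj₀1, hj₀n⟩, hj₀top⟩ := hj₀mem
  refine ⟨j₀, hj₀1, hj₀top, fun t => ?_⟩
  cases t with
  | zero => simp
  | succ t' =>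
    set t := t' + 1
    have ht1 : 1 ≤ t := by omega
    by_cases htop : μ (Polynomial.hasseDeriv t Q) = ⊤
    · rw [htop, smul_top (by omega : j₀ ≠ 0), top_add]; exact le_top
    · have htn : t ≤ n := by
        by_contra hc
        exact htop (by rw [hasse_eq_zero_of_gt hQm (by omega)]; exact hμ.map_zero)
      have htS : t ∈ S := by
        rw [hS_def, Finset.mem_filter, Finset.mem_Icc]; exact ⟨⟨ht1, htn⟩, htop⟩
      have h1 := hmax t htS
      have h2 : (t * j₀) • ((N / t) • (AQ - av t)) ≤ (t * j₀) • ((N / j₀) • (AQ - av j₀)) :=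
        nsmul_le_nsmul_right h1 _
      rw [← mul_smul, ← mul_smul] at h2
      have e1 : t * j₀ * (N / t) = N * j₀ := by
        rw [mul_comm t j₀, mul_assoc, Nat.mul_div_cancel' (Nat.dvd_factorial ht1 htn)]
        ring
      have e2 : t * j₀ * (N / j₀) = N * t := by
        rw [mul_assoc, Nat.mul_div_cancel' (Nat.dvd_factorial hj₀1 hj₀n)]
        ring
      rw [e1, e2, mul_smul, mul_smul] at h2
      have h3 : j₀ • (AQ - av t) ≤ t • (AQ - av j₀) := le_of_nsmul_le_nsmul_right hN0 h2
      rw [smul_sub, smul_sub, sub_le_sub_iff] at h3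
      -- h3 : j₀ • AQ + t • av j₀ ≤ t • AQ + j₀ • av t
      have h4 : (((j₀ • AQ + t • av j₀ : Γ)) : WithTop Γ) ≤ ((t • AQ + j₀ • av t : Γ) : WithTop Γ) :=
        WithTop.coe_le_coe.2 h3
      rw [WithTop.coe_add, WithTop.coe_add, WithTop.coe_nsmul, WithTop.coe_nsmul,
        WithTop.coe_nsmul, WithTop.coe_nsmul, hAQ, hav _ hj₀top, hav _ htop] at h4
      calc j₀ • μ Q + t • μ (Polynomial.hasseDeriv j₀ Q)
          ≤ t • μ Q + j₀ • μ (Polynomial.hasseDeriv t Q) := h4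
        _ = j₀ • μ (Polynomial.hasseDeriv t Q) + t • μ Q := by rw [add_comm]

end Eps
section Eps2

open EpsAux Polynomial

set_option linter.unusedSectionVars false
set_option maxHeartbeats 1000000

variable {Γ : Type*} [AddCommGroup Γ] [LinearOrder Γ] [IsOrderedAddMonoid Γ] {K : Type*} [Field K]
variable {μ : K[X] → WithTop Γ} {Q : K[X]}
variable (hμ : IsValAdd μ) (hQm : Q.Monic) (hn : 1 ≤ Q.natDegree)
variable (hKP : ∀ g : K[X], g ≠ 0 → g.degree < Q.degree →
  ∃ j, 1 ≤ j ∧ μ (hasseDeriv j Q) ≠ ⊤ ∧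
    ∀ i, 1 ≤ i → j • μ g + i • μ (hasseDeriv j Q) < i • μ Q + j • μ (hasseDeriv i g))
variable {j₀ : ℕ} (hj₀ : 1 ≤ j₀) (hj₀top : μ (hasseDeriv j₀ Q) ≠ ⊤)
variable (hP : ∀ t, j₀ • μ Q + t • μ (hasseDeriv j₀ Q) ≤ j₀ • μ (hasseDeriv t Q) + t • μ Q)

include hμ hQm hn hKP hj₀ hj₀top hP

lemma DsmallLt {g : K[X]} (hg0 : g ≠ 0) (hgd : g.degree < Q.degree) {s : ℕ} (hs : 1 ≤ s) :
    j₀ • μ g + s • μ (hasseDeriv j₀ Q) < j₀ • μ (hasseDeriv s g) + s • μ Q := by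
  have hQtop : μ Q ≠ ⊤ := mu_ne_top hμ hQm.ne_zero
  obtain ⟨j₁, hj₁, hj₁top, hstr⟩ := hKP g hg0 hgd
  have h1 : j₀ • (j₁ • μ g + s • μ (hasseDeriv j₁ Q)) <
      j₀ • (s • μ Q + j₁ • μ (hasseDeriv s g)) :=
    (smul_lt_smul_iff (by omega)).2 (hstr s hs)
  have h2 : s • (j₀ • μ Q + j₁ • μ (hasseDeriv j₀ Q)) ≤
      s • (j₀ • μ (hasseDeriv j₁ Q) + j₁ • μ Q) :=
    wsmul_mono _ (hP j₁)
  have hC : s • (j₀ • μ Q + j₁ • μ (hasseDeriv j₀ Q)) ≠ ⊤ := by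
    refine smul_ne_top (WithTop.add_ne_top.2 ⟨smul_ne_top hQtop, smul_ne_top hj₀top⟩)
  have hsum := wadd_lt_add h1 h2 hC
  rw [smul_add, smul_add, smul_add, smul_add] at hsum
  rw [smul_smul_comm j₀ j₁ (μ g), smul_smul_comm j₀ s (μ (hasseDeriv j₁ Q)),
    smul_smul_comm j₀ s (μ Q), smul_smul_comm j₀ j₁ (μ (hasseDeriv s g)),
    smul_smul_comm s j₁ (μ (hasseDeriv j₀ Q)), smul_smul_comm s j₁ (μ Q)] at hsum
  -- hsum : j₁•(j₀•μg) + s•(j₀•μ∂j₁Q) + (s•(j₀•μQ) + j₁•(s•μ∂j₀Q)) <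
  --        s•(j₀•μQ) + j₁•(j₀•μ∂sg) + (s•(j₀•μ∂j₁Q) + j₁•(s•μQ))
  have key : (j₁ • (j₀ • μ g) + j₁ • (s • μ (hasseDeriv j₀ Q))) +
      (s • (j₀ • μ Q) + s • (j₀ • μ (hasseDeriv j₁ Q))) <
      (j₁ • (j₀ • μ (hasseDeriv s g)) + j₁ • (s • μ Q)) +
      (s • (j₀ • μ Q) + s • (j₀ • μ (hasseDeriv j₁ Q))) := by
    convert hsum using 1 <;> abel
  have key2 : j₁ • (j₀ • μ g + s • μ (hasseDeriv j₀ Q)) <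
      j₁ • (j₀ • μ (hasseDeriv s g) + s • μ Q) := by
    rw [smul_add, smul_add]
    exact wcancel_lt (WithTop.add_ne_top.2 ⟨smul_ne_top (smul_ne_top hQtop),
      smul_ne_top (smul_ne_top hj₁top)⟩) key
  exact (smul_lt_smul_iff (by omega : j₁ ≠ 0)).1 key2

lemma Dsmall {g : K[X]} (hgd : g.degree < Q.degree) (s : ℕ) :
    j₀ • μ g + s • μ (hasseDeriv j₀ Q) ≤ j₀ • μ (hasseDeriv s g) + s • μ Q := by
  by_cases hg0 : g = 0
  · rw [hg0, map_zero, hμ.map_zero, smul_top (by omega : j₀ ≠ 0), top_add, top_add]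
  · cases s with
    | zero => simp [hasseDeriv_zero]
    | succ s' => exact (DsmallLt hμ hQm hn hKP hj₀ hj₀top hP hg0 hgd (by omega)).le

lemma dropA1 {r g : K[X]} (hr : r.degree < Q.degree) (hgd : g.degree < Q.degree) :
    μ r + μ g + μ (hasseDeriv j₀ Q) ≤ μ (hasseDeriv j₀ (r * g)) + μ Q := by
  rw [hasseDeriv_mul]
  obtain ⟨k, hk, hinf⟩ := Finset.exists_mem_eq_inf (Finset.HasAntidiagonal.antidiagonal j₀)
    ⟨(j₀, 0), by simp⟩ (fun ij => μ (hasseDeriv ij.1 r * hasseDeriv ij.2 g))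
  obtain ⟨s, t⟩ := k
  dsimp only at hinf
  refine le_trans ?_ (add_le_add_left (inf_le_mu_sum hμ _ _) (μ Q))
  rw [hinf]
  have hst : s + t = j₀ := Finset.HasAntidiagonal.mem_antidiagonal.1 hk
  have hA := wadd_le_add (Dsmall hμ hQm hn hKP hj₀ hj₀top hP hr s)
    (Dsmall hμ hQm hn hKP hj₀ hj₀top hP hgd t)
  have key : j₀ • (μ r + μ g + μ (hasseDeriv j₀ Q)) ≤
      j₀ • (μ (hasseDeriv s r) + μ (hasseDeriv t g) + μ Q) := by
    convert hA using 1 <;> (simp only [smul_add, ← hst, add_nsmul]; abel)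
  have := (smul_le_smul_iff (by omega : j₀ ≠ 0)).1 key
  rwa [hμ.map_mul]

lemma lemmaA {r g : K[X]} (hr : r.degree < Q.degree) (hgd : g.degree < Q.degree) :
    μ r + μ g ≤ μ (r * g /ₘ Q) + μ Q ∧ μ r + μ g ≤ μ (r * g %ₘ Q) := by
  classical
  have hQtop : μ Q ≠ ⊤ := mu_ne_top hμ hQm.ne_zero
  set c := r * g %ₘ Q with hc_def
  set d := r * g /ₘ Q with hd_def
  have hcd : c + Q * d = r * g := Polynomial.modByMonic_add_div (r * g) Q
  have key : μ r + μ g ≤ μ d + μ Q := by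
    by_contra hlt'
    have hlt : μ d + μ Q < μ r + μ g := not_le.1 hlt'
    have hd0 : d ≠ 0 := by
      intro h
      rw [h, hμ.map_zero, top_add] at hlt
      exact not_top_lt hlt
    have hrg0 : r * g ≠ 0 := by
      intro h
      apply hd0
      rw [hd_def, h, Polynomial.zero_divByMonic]
    have hr0 : r ≠ 0 := fun h => hrg0 (by rw [h, zero_mul])
    have hg0 : g ≠ 0 := fun h => hrg0 (by rw [h, mul_zero])
    have hrg : μ (r * g) = μ r + μ g := hμ.map_mul r g
    have hQd : μ (Q * d) = μ d + μ Q := by rw [hμ.map_mul, add_comm]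
    -- μ c = μ d + μ Q
    have hc : μ c = μ d + μ Q := by
      have e1 : r * g + -(Q * d) = c := by linear_combination -hcd
      have le1 : min (μ (r * g)) (μ (Q * d)) ≤ μ c := by
        have := hμ.map_add (r * g) (-(Q * d))
        rwa [mu_neg hμ, e1] at this
      have e2 : r * g + -c = Q * d := by linear_combination -hcd
      have le2 : min (μ (r * g)) (μ c) ≤ μ (Q * d) := by
        have := hμ.map_add (r * g) (-c)
        rwa [mu_neg hμ, e2] at this
      refine le_antisymm ?_ ?_
      · rw [hQd] at le2
        rcases min_cases (μ (r * g)) (μ c) with ⟨he, _⟩ | ⟨he, _⟩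
        · rw [he] at le2
          rw [hrg] at le2
          exact absurd (lt_of_lt_of_le hlt le2) (lt_irrefl _)
        · rwa [he] at le2
      · rw [hrg, hQd] at le1
        exact le_trans (le_min (le_of_lt hlt) le_rfl) le1
    have hctop : μ c ≠ ⊤ := by
      rw [hc]
      exact WithTop.add_ne_top.2 ⟨mu_ne_top hμ hd0, hQtop⟩
    have hc0 : c ≠ 0 := by
      intro h
      exact hctop (by rw [h, hμ.map_zero])
    -- degrees
    have hrn : r.natDegree < Q.natDegree := Polynomial.natDegree_lt_natDegree hr0 hr
    have hgn : g.natDegree < Q.natDegree := Polynomial.natDegree_lt_natDegree hg0 hgd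
    have hdd : d.degree < Q.degree := by
      have h1 : d.natDegree = (r * g).natDegree - Q.natDegree :=
        Polynomial.natDegree_divByMonic (r * g) hQm
      have h2 : (r * g).natDegree ≤ r.natDegree + g.natDegree := Polynomial.natDegree_mul_le
      have h3 : d.natDegree < Q.natDegree := by omega
      calc d.degree = (d.natDegree : WithBot ℕ) := Polynomial.degree_eq_natDegree hd0
        _ < (Q.natDegree : WithBot ℕ) := by exact_mod_cast h3
        _ = Q.degree := (Polynomial.degree_eq_natDegree hQm.ne_zero).symm
    have hcdlt : c.degree < Q.degree := Polynomial.degree_modByMonic_lt (r * g) hQm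
    set E := μ (hasseDeriv j₀ Q) with hE_def
    set v₀ := E + μ d with hv₀_def
    have hv₀top : v₀ ≠ ⊤ := WithTop.add_ne_top.2 ⟨hj₀top, mu_ne_top hμ hd0⟩
    -- upper bound : μ (∂ⱼ₀ (Q * d)) = v₀
    have hupper : μ (hasseDeriv j₀ (Q * d)) = v₀ := by
      rw [hasseDeriv_mul]
      refine mu_sum_eq hμ (s := Finset.HasAntidiagonal.antidiagonal j₀) (k₀ := (j₀, 0)) (by simp) ?_ hv₀top ?_
      · rw [hμ.map_mul]
        simp [hasseDeriv_zero, hv₀_def, hE_def]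
      · rintro ⟨s, t⟩ hk hne
        have hst : s + t = j₀ := Finset.HasAntidiagonal.mem_antidiagonal.1 hk
        have ht1 : 1 ≤ t := by
          rcases Nat.eq_zero_or_pos t with h | h
          · exact absurd (by simp [Prod.ext_iff, h, hst, ← hst] : (s, t) = (j₀, 0)) hne
          · exact h
        rw [hμ.map_mul]
        by_cases hQs : μ (hasseDeriv s Q) = ⊤
        · rw [hQs, top_add]; exact lt_top_iff_ne_top.2 hv₀top
        by_cases hdt : μ (hasseDeriv t d) = ⊤
        · rw [hdt, add_top]; exact lt_top_iff_ne_top.2 hv₀top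
        have h1 : j₀ • μ d + t • E < j₀ • μ (hasseDeriv t d) + t • μ Q :=
          DsmallLt hμ hQm hn hKP hj₀ hj₀top hP hd0 hdd ht1
        have h2 : j₀ • μ Q + s • E ≤ j₀ • μ (hasseDeriv s Q) + s • μ Q := hP s
        have hC2 : j₀ • μ Q + s • E ≠ ⊤ :=
          WithTop.add_ne_top.2 ⟨smul_ne_top hQtop, smul_ne_top hj₀top⟩
        have hsum := wadd_lt_add h1 h2 hC2
        have key2 : j₀ • v₀ + j₀ • μ Q <
            j₀ • (μ (hasseDeriv s Q) + μ (hasseDeriv t d)) + j₀ • μ Q := by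
          convert hsum using 1
          · simp only [hv₀_def, smul_add, ← hst, add_nsmul]; abel
          · simp only [smul_add, ← hst, add_nsmul]; abel
        have key4 := wcancel_lt (smul_ne_top hQtop) key2
        exact (smul_lt_smul_iff (by omega : j₀ ≠ 0)).1 key4
    -- lower bound : v₀ < μ (∂ⱼ₀ (Q * d))
    have hlower : v₀ < μ (hasseDeriv j₀ (Q * d)) := by
      have hQd_eq : hasseDeriv j₀ (Q * d) = hasseDeriv j₀ (r * g) + -(hasseDeriv j₀ c) := by
        rw [← map_neg, ← map_add]
        congr 1
        linear_combination hcd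
      rw [hQd_eq]
      have hminle : min (μ (hasseDeriv j₀ (r * g))) (μ (hasseDeriv j₀ c)) ≤
          μ (hasseDeriv j₀ (r * g) + -(hasseDeriv j₀ c)) := by
        have := hμ.map_add (hasseDeriv j₀ (r * g)) (-(hasseDeriv j₀ c))
        rwa [mu_neg hμ] at this
      refine lt_of_lt_of_le (lt_min ?_ ?_) hminle
      · -- v₀ < μ ∂(r g)
        have hA1 : μ r + μ g + E ≤ μ (hasseDeriv j₀ (r * g)) + μ Q :=
          dropA1 hμ hQm hn hKP hj₀ hj₀top hP hr hgd
        have h5 : μ d + μ Q + E < μ r + μ g + E :=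
          (WithTop.add_lt_add_iff_right hj₀top).2 hlt
        have h6 : v₀ + μ Q < μ (hasseDeriv j₀ (r * g)) + μ Q := by
          refine lt_of_lt_of_le (lt_of_eq_of_lt ?_ h5) hA1
          rw [hv₀_def]; abel
        exact wcancel_lt hQtop h6
      · -- v₀ < μ ∂ c
        have h1 : j₀ • μ c + j₀ • E < j₀ • μ (hasseDeriv j₀ c) + j₀ • μ Q :=
          DsmallLt hμ hQm hn hKP hj₀ hj₀top hP hc0 hcdlt hj₀
        have h2 : μ c + E < μ (hasseDeriv j₀ c) + μ Q := by
          refine (smul_lt_smul_iff (by omega : j₀ ≠ 0)).1 ?_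
          rw [smul_add, smul_add]; exact h1
        have h3 : v₀ + μ Q < μ (hasseDeriv j₀ c) + μ Q := by
          refine lt_of_eq_of_lt ?_ h2
          rw [hv₀_def, hc]; abel
        exact wcancel_lt hQtop h3
    rw [hupper] at hlower
    exact absurd hlower (lt_irrefl v₀)
  refine ⟨key, ?_⟩
  -- c part
  have e1 : r * g + -(Q * d) = c := by linear_combination -hcd
  have le1 : min (μ (r * g)) (μ (Q * d)) ≤ μ c := by
    have := hμ.map_add (r * g) (-(Q * d))
    rwa [mu_neg hμ, e1] at this
  rw [hμ.map_mul, hμ.map_mul] at le1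
  refine le_trans (le_min le_rfl ?_) le1
  rw [add_comm (μ Q) (μ d)]
  exact key

end Eps2
section Eps3

open EpsAux Polynomial

set_option linter.unusedSectionVars false
set_option maxHeartbeats 1000000

variable {Γ : Type*} [AddCommGroup Γ] [LinearOrder Γ] [IsOrderedAddMonoid Γ] {K : Type*} [Field K]
variable {μ : K[X] → WithTop Γ} {Q : K[X]}
variable (hμ : IsValAdd μ) (hQm : Q.Monic) (hn : 1 ≤ Q.natDegree)
variable (hKP : ∀ g : K[X], g ≠ 0 → g.degree < Q.degree →
  ∃ j, 1 ≤ j ∧ μ (hasseDeriv j Q) ≠ ⊤ ∧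
    ∀ i, 1 ≤ i → j • μ g + i • μ (hasseDeriv j Q) < i • μ Q + j • μ (hasseDeriv i g))
variable {j₀ : ℕ} (hj₀ : 1 ≤ j₀) (hj₀top : μ (hasseDeriv j₀ Q) ≠ ⊤)
variable (hP : ∀ t, j₀ • μ Q + t • μ (hasseDeriv j₀ Q) ≤ j₀ • μ (hasseDeriv t Q) + t • μ Q)

include hμ hQm hn hKP hj₀ hj₀top hP

lemma trunc_mul_small_aux : ∀ (M : ℕ) (h g : K[X]), h.natDegree < M → g.degree < Q.degree →
    trunc μ Q h + μ g ≤ trunc μ Q (h * g) := by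
  intro M
  induction M with
  | zero => intro h g hh; omega
  | succ M ih =>
    intro h g hh hgd
    by_cases hg0 : g = 0
    · rw [hg0, mul_zero, trunc_zero_poly hQm hn hμ]; exact le_top
    set r := h %ₘ Q with hr_def
    set q := h /ₘ Q with hq_def
    set c := (r * g) %ₘ Q with hc_def
    set d := (r * g) /ₘ Q with hd_def
    have hhd : r + Q * q = h := Polynomial.modByMonic_add_div h Q
    have hcd : c + Q * d = r * g := Polynomial.modByMonic_add_div (r * g) Q
    have hr_small : r.degree < Q.degree := Polynomial.degree_modByMonic_lt h hQm
    have hc_small : c.degree < Q.degree := Polynomial.degree_modByMonic_lt (r * g) hQm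
    have hdecomp : (h * g) /ₘ Q = d + q * g ∧ (h * g) %ₘ Q = c := by
      refine Polynomial.div_modByMonic_unique (d + q * g) c hQm ⟨?_, hc_small⟩
      rw [mul_add]
      linear_combination hcd + g * hhd
    have hd_small : d.degree < Q.degree := by
      by_cases hd0 : d = 0
      · rw [hd0, Polynomial.degree_zero]; exact deg_bot_lt hQm
      · have hrg0 : r * g ≠ 0 := by
          intro hx; exact hd0 (by rw [hd_def, hx, Polynomial.zero_divByMonic])
        have hr0 : r ≠ 0 := fun hx => hrg0 (by rw [hx, zero_mul])
        have h1 : d.natDegree = (r * g).natDegree - Q.natDegree :=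
          Polynomial.natDegree_divByMonic (r * g) hQm
        have h2 : (r * g).natDegree ≤ r.natDegree + g.natDegree := Polynomial.natDegree_mul_le
        have hrn : r.natDegree < Q.natDegree := Polynomial.natDegree_lt_natDegree hr0 hr_small
        have hgn : g.natDegree < Q.natDegree := Polynomial.natDegree_lt_natDegree hg0 hgd
        have h3 : d.natDegree < Q.natDegree := by omega
        calc d.degree = (d.natDegree : WithBot ℕ) := Polynomial.degree_eq_natDegree hd0
          _ < (Q.natDegree : WithBot ℕ) := by exact_mod_cast h3
          _ = Q.degree := (Polynomial.degree_eq_natDegree hQm.ne_zero).symm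
    have lemA := lemmaA hμ hQm hn hKP hj₀ hj₀top hP hr_small hgd
    have branch1 : trunc μ Q h + μ g ≤ μ c :=
      le_trans (add_le_add_left (trunc_le_mod hQm hn hμ h) (μ g)) lemA.2
    have b2a : trunc μ Q h + μ g ≤ μ d + μ Q :=
      le_trans (add_le_add_left (trunc_le_mod hQm hn hμ h) (μ g)) lemA.1
    have b2b : trunc μ Q h + μ g ≤ trunc μ Q (q * g) + μ Q := by
      by_cases hq0 : q = 0
      · rw [hq0, zero_mul, trunc_zero_poly hQm hn hμ, top_add]; exact le_top
      · have hqd : Q.degree ≤ h.degree := by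
          by_contra hcon
          exact hq0 ((Polynomial.divByMonic_eq_zero_iff hQm).2 (not_le.1 hcon))
        have hhn : Q.natDegree ≤ h.natDegree := Polynomial.natDegree_le_natDegree hqd
        have hqn : q.natDegree < M := by
          rw [hq_def, Polynomial.natDegree_divByMonic h hQm]
          omega
        have ihq := ih q g hqn hgd
        calc trunc μ Q h + μ g ≤ (trunc μ Q q + μ Q) + μ g :=
              add_le_add_left (trunc_le_div hQm hn hμ h) (μ g)
          _ = (trunc μ Q q + μ g) + μ Q := by abel
          _ ≤ trunc μ Q (q * g) + μ Q := add_le_add_left ihq (μ Q)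
    have hmin2 : trunc μ Q h + μ g ≤ trunc μ Q (d + q * g) + μ Q := by
      refine le_trans ?_ (add_le_add_left (min_trunc_le hQm hn hμ d (q * g)) (μ Q))
      rw [wmin_add, trunc_small hQm hn hμ hd_small]
      exact le_min b2a b2b
    have hfin := min_le_trunc hQm hn hμ (h * g)
    rw [hdecomp.1, hdecomp.2] at hfin
    exact le_trans (le_min branch1 hmin2) hfin

lemma trunc_mul_small (h g : K[X]) (hgd : g.degree < Q.degree) :
    trunc μ Q h + μ g ≤ trunc μ Q (h * g) :=
  trunc_mul_small_aux hμ hQm hn hKP hj₀ hj₀top hP (h.natDegree + 1) h g (by omega) hgd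

lemma dropB : ∀ (M : ℕ) (f : K[X]), f.natDegree < M → ∀ i : ℕ,
    j₀ • trunc μ Q f + i • μ (hasseDeriv j₀ Q) ≤ j₀ • trunc μ Q (hasseDeriv i f) + i • μ Q := by
  intro M
  induction M with
  | zero => intro f hf; omega
  | succ M ih =>
    intro f hf i
    by_cases hsmall : f.degree < Q.degree
    · rw [trunc_small hQm hn hμ hsmall,
        trunc_small hQm hn hμ (deg_hasse_lt_of_lt hQm hsmall i)]
      exact Dsmall hμ hQm hn hKP hj₀ hj₀top hP hsmall i
    · set r := f %ₘ Q with hr_def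
      set q := f /ₘ Q with hq_def
      have hfd : r + Q * q = f := Polynomial.modByMonic_add_div f Q
      have hqd : Q.degree ≤ f.degree := not_lt.1 hsmall
      have hfn : Q.natDegree ≤ f.natDegree := Polynomial.natDegree_le_natDegree hqd
      have hqn : q.natDegree < M := by
        rw [hq_def, Polynomial.natDegree_divByMonic f hQm]
        omega
      have hr_small : r.degree < Q.degree := Polynomial.degree_modByMonic_lt f hQm
      have hder : hasseDeriv i f =
          hasseDeriv i r + ∑ ij ∈ Finset.HasAntidiagonal.antidiagonal i, hasseDeriv ij.1 Q * hasseDeriv ij.2 q := by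
        conv_lhs => rw [← hfd]
        rw [map_add, hasseDeriv_mul]
      have hb : min (trunc μ Q (hasseDeriv i r))
          ((Finset.HasAntidiagonal.antidiagonal i).inf fun ij => trunc μ Q (hasseDeriv ij.1 Q * hasseDeriv ij.2 q))
          ≤ trunc μ Q (hasseDeriv i f) := by
        rw [hder]
        exact le_trans (min_le_min le_rfl (inf_trunc_le_sum hQm hn hμ _ _))
          (min_trunc_le hQm hn hμ _ _)
      refine le_trans ?_ (add_le_add_left (wsmul_mono j₀ hb) (i • μ Q))
      rcases min_cases (trunc μ Q (hasseDeriv i r))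
        ((Finset.HasAntidiagonal.antidiagonal i).inf fun ij => trunc μ Q (hasseDeriv ij.1 Q * hasseDeriv ij.2 q))
        with ⟨hmin, _⟩ | ⟨hmin, _⟩ <;> rw [hmin]
      · -- branch r
        rw [trunc_small hQm hn hμ (deg_hasse_lt_of_lt hQm hr_small i)]
        calc j₀ • trunc μ Q f + i • μ (hasseDeriv j₀ Q)
            ≤ j₀ • μ r + i • μ (hasseDeriv j₀ Q) :=
              add_le_add_left (wsmul_mono j₀ (trunc_le_mod hQm hn hμ f)) _
          _ ≤ j₀ • μ (hasseDeriv i r) + i • μ Q :=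
              Dsmall hμ hQm hn hKP hj₀ hj₀top hP hr_small i
      · -- branch q-part
        obtain ⟨k, hk, hinf⟩ := Finset.exists_mem_eq_inf (Finset.HasAntidiagonal.antidiagonal i)
          ⟨(i, 0), by simp⟩ (fun ij => trunc μ Q (hasseDeriv ij.1 Q * hasseDeriv ij.2 q))
        obtain ⟨s, t⟩ := k
        dsimp only at hinf
        rw [hinf]
        have hst : s + t = i := Finset.HasAntidiagonal.mem_antidiagonal.1 hk
        have hterm : trunc μ Q (hasseDeriv t q) + μ (hasseDeriv s Q) ≤
            trunc μ Q (hasseDeriv s Q * hasseDeriv t q) := by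
          cases s with
          | zero =>
            rw [mul_comm]
            simpa [hasseDeriv_zero] using trunc_mul_Q_ge hQm hn hμ (hasseDeriv t q)
          | succ s' =>
            rw [mul_comm]
            exact trunc_mul_small hμ hQm hn hKP hj₀ hj₀top hP _ _
              (deg_hasseQ_lt hQm hn (by omega))
        have ihq := ih q hqn t
        have hPs := hP s
        have hcomb := wadd_le_add ihq hPs
        have key : j₀ • (trunc μ Q q + μ Q) + i • μ (hasseDeriv j₀ Q) ≤
            j₀ • (trunc μ Q (hasseDeriv t q) + μ (hasseDeriv s Q)) + i • μ Q := by
          convert hcomb using 1 <;> (simp only [smul_add, ← hst, add_nsmul]; abel)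
        calc j₀ • trunc μ Q f + i • μ (hasseDeriv j₀ Q)
            ≤ j₀ • (trunc μ Q q + μ Q) + i • μ (hasseDeriv j₀ Q) :=
              add_le_add_left (wsmul_mono j₀ (trunc_le_div hQm hn hμ f)) _
          _ ≤ j₀ • (trunc μ Q (hasseDeriv t q) + μ (hasseDeriv s Q)) + i • μ Q := key
          _ ≤ j₀ • trunc μ Q (hasseDeriv s Q * hasseDeriv t q) + i • μ Q :=
              add_le_add_left (wsmul_mono j₀ hterm) _

end Eps3


section Final

open EpsAux Polynomial

set_option linter.unusedSectionVars false

variable {Γ : Type*} [AddCommGroup Γ] [LinearOrder Γ] [IsOrderedAddMonoid Γ] {K : Type*} [Field K]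
variable {μ : K[X] → WithTop Γ}

lemma qCoeff_one_eq_zero (i : ℕ) (g : K[X]) : qCoeff (1 : K[X]) i g = 0 := by
  induction i generalizing g with
  | zero => exact Polynomial.modByMonic_one g
  | succ i ih => rw [qCoeff_succ_eq]; exact ih _

lemma trunc_one_top (hμ : IsValAdd μ) (g : K[X]) : trunc μ (1 : K[X]) g = ⊤ := by
  refine le_antisymm le_top (Finset.le_inf fun i _ => ?_)
  rw [qCoeff_one_eq_zero, zero_mul, hμ.map_zero]

end Final

/-- for an abstract key polynomial `Q` and any `f ∈ K[X]`,
`ε_{μ_Q}(f) ≤ ε_{μ_Q}(Q) = ε_μ(Q)` (the comparisons of ε-factors are stated in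
cross-multiplied, division-free form via `EpsLE`). -/
theorem eps_trunc_le {K Γ : Type*} [Field K] [AddCommGroup Γ] [LinearOrder Γ] [IsOrderedAddMonoid Γ]
    (ν : K → WithTop Γ) (μ : Polynomial K → WithTop Γ)
    (hν : IsValAdd ν) (hμ : IsValAdd μ) (hext : ∀ c : K, μ (Polynomial.C c) = ν c)
    (Q : Polynomial K) (hQ : IsABKP μ Q) (f : Polynomial K) :
    EpsLE (trunc μ Q) f (trunc μ Q) Q ∧
      (EpsLE (trunc μ Q) Q μ Q ∧ EpsLE μ Q (trunc μ Q) Q) := by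
  obtain ⟨hQm, hKP'⟩ := hQ
  have hKP : ∀ g : Polynomial K, g ≠ 0 → g.degree < Q.degree →
      ∃ j, 1 ≤ j ∧ μ (hasseDeriv j Q) ≠ ⊤ ∧
        ∀ i, 1 ≤ i → j • μ g + i • μ (hasseDeriv j Q) < i • μ Q + j • μ (hasseDeriv i g) :=
    fun g h1 h2 => hKP' g h1 h2
  by_cases hn : 1 ≤ Q.natDegree
  · obtain ⟨j₀, hj₀, hj₀top, hP⟩ := exists_j0 hQm hn hμ
    have htQ : trunc μ Q Q = μ Q := trunc_Q hQm hn hμ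
    have htD : ∀ s, 1 ≤ s → trunc μ Q (hasseDeriv s Q) = μ (hasseDeriv s Q) :=
      fun s hs => trunc_small hQm hn hμ (deg_hasseQ_lt hQm hn hs)
    refine ⟨?_, ?_, ?_⟩
    · intro i hi
      refine ⟨j₀, hj₀, ?_⟩
      rw [htD j₀ hj₀, htQ]
      calc j₀ • trunc μ Q f + i • μ (hasseDeriv j₀ Q)
          ≤ j₀ • trunc μ Q (hasseDeriv i f) + i • μ Q :=
            dropB hμ hQm hn hKP hj₀ hj₀top hP (f.natDegree + 1) f (by omega) i
        _ = i • μ Q + j₀ • trunc μ Q (hasseDeriv i f) := add_comm _ _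
    · intro i hi
      refine ⟨i, hi, ?_⟩
      rw [htD i hi, htQ, add_comm]
    · intro i hi
      refine ⟨i, hi, ?_⟩
      rw [htD i hi, htQ, add_comm]
  · have hQ1 : Q = 1 := (hQm.natDegree_eq_zero).1 (by omega)
    subst hQ1
    have htop : ∀ g : Polynomial K, trunc μ (1 : Polynomial K) g = ⊤ := trunc_one_top hμ
    refine ⟨?_, ?_, ?_⟩
    all_goals
      intro i hi
      refine ⟨1, le_rfl, ?_⟩
      simp [htop, EpsAux.smul_top (show i ≠ 0 by omega)]
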